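/- The binary Euclidean operator B₂, defined by B₂(h)(x) = Σ_{k≥1} [ (1/(x+2^k))² h(x/(x+2^k)) + (1/(1+2^k x))² h(1/(1+2^k x)) ], satisfies ∫₀¹ |B₂(h)(t)| dt ≤ ∫₀¹ |h(t)| dt for all h ∈ L¹([0,1]); in particular B₂ is a bounded linear operator on L¹([0,1]) of norm at most 1. -/

import Mathlib

open MeasureTheory Set Filter Topology ENNReal NNReal

noncomputable def B2 (h : ℝ → ℝ) (x : ℝ) : ℝ :=
  ∑' k : ℕ, ((x + 2 ^ (k + 1) : ℝ)⁻¹ ^ 2 * h (x / (x + 2 ^ (k + 1))) +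
    ((1 + 2 ^ (k + 1) * x : ℝ)⁻¹ ^ 2) * h (1 / (1 + 2 ^ (k + 1) * x)))

namespace B2Aux

noncomputable def bc (k : ℕ) : ℝ := 2 ^ (k + 1)

noncomputable def bf (k : ℕ) (x : ℝ) : ℝ := x / (x + bc k)

noncomputable def bg (k : ℕ) (x : ℝ) : ℝ := 1 / (1 + bc k * x)

lemma bc_pos (k : ℕ) : (0 : ℝ) < bc k := by unfold bc; positivity

lemma two_le_bc (k : ℕ) : (2 : ℝ) ≤ bc k := by
  have : (2:ℝ) ^ 1 ≤ 2 ^ (k+1) := pow_le_pow_right₀ one_le_two (Nat.le_add_left 1 k)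
  simpa [bc] using this

lemma den1_pos (k : ℕ) {x : ℝ} (hx : 0 ≤ x) : 0 < x + bc k := by
  have := bc_pos k; linarith

lemma den2_pos (k : ℕ) {x : ℝ} (hx : 0 ≤ x) : 0 < 1 + bc k * x := by
  have := bc_pos k; nlinarith

lemma bf_mem (k : ℕ) {x : ℝ} (hx : x ∈ Icc (0:ℝ) 1) : bf k x ∈ Icc (0:ℝ) 1 := by
  obtain ⟨h0, h1⟩ := hx
  have hd := den1_pos k h0
  constructor
  · exact div_nonneg h0 hd.le
  · unfold bf; rw [div_le_one hd]; have := bc_pos k; linarith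

lemma bg_mem (k : ℕ) {x : ℝ} (hx : x ∈ Icc (0:ℝ) 1) : bg k x ∈ Icc (0:ℝ) 1 := by
  obtain ⟨h0, h1⟩ := hx
  have hd := den2_pos k h0
  unfold bg
  constructor
  · positivity
  · rw [div_le_one hd]; have := bc_pos k; nlinarith

lemma bf_deriv (k : ℕ) {x : ℝ} (hx : x ∈ Icc (0:ℝ) 1) :
    HasDerivWithinAt (bf k) (bc k / (x + bc k) ^ 2) (Icc 0 1) x := by
  have hd := (den1_pos k hx.1).ne'
  have h := ((hasDerivAt_id x).div ((hasDerivAt_id x).add_const (bc k)) hd).hasDerivWithinAt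
    (s := Icc 0 1)
  unfold bf
  refine h.congr_deriv ?_
  simp only [id_eq]
  ring

lemma bg_deriv (k : ℕ) {x : ℝ} (hx : x ∈ Icc (0:ℝ) 1) :
    HasDerivWithinAt (bg k) (-(bc k) / (1 + bc k * x) ^ 2) (Icc 0 1) x := by
  have hd := (den2_pos k hx.1).ne'
  have h := ((hasDerivAt_const x (1:ℝ)).div
    (((hasDerivAt_id x).const_mul (bc k)).const_add 1) hd).hasDerivWithinAt (s := Icc 0 1)
  unfold bg
  refine h.congr_deriv ?_
  simp only [id_eq]
  ring

lemma bf_inj (k : ℕ) : InjOn (bf k) (Icc (0:ℝ) 1) := by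
  intro x hx y hy hxy
  have hdx := (den1_pos k hx.1).ne'
  have hdy := (den1_pos k hy.1).ne'
  have hc := bc_pos k
  unfold bf at hxy
  field_simp at hxy
  nlinarith [hxy]

lemma bg_inj (k : ℕ) : InjOn (bg k) (Icc (0:ℝ) 1) := by
  intro x hx y hy hxy
  have hdx := (den2_pos k hx.1).ne'
  have hdy := (den2_pos k hy.1).ne'
  have hc := bc_pos k
  unfold bg at hxy
  field_simp at hxy
  exact (mul_left_cancel₀ hc.ne' (add_left_cancel hxy)).symm

lemma bf_image (k : ℕ) : bf k '' Icc (0:ℝ) 1 = Icc 0 (1 + bc k)⁻¹ := by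
  have hc := bc_pos k
  have h1c : (0:ℝ) < 1 + bc k := by linarith
  ext y
  simp only [mem_image, mem_Icc]
  constructor
  · rintro ⟨x, ⟨hx0, hx1⟩, rfl⟩
    have hd := den1_pos k hx0
    refine ⟨div_nonneg hx0 hd.le, ?_⟩
    unfold bf
    rw [inv_eq_one_div, div_le_div_iff₀ hd h1c]
    nlinarith
  · rintro ⟨hy0, hy1⟩
    have hy1' : y < 1 := lt_of_le_of_lt hy1 (by rw [inv_lt_one₀ h1c]; linarith)
    have h1y : (0:ℝ) < 1 - y := by linarith
    have hy1'' : y * (1 + bc k) ≤ 1 := by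
      rw [inv_eq_one_div] at hy1; exact (le_div_iff₀ h1c).mp hy1
    refine ⟨bc k * y / (1 - y), ⟨by positivity, ?_⟩, ?_⟩
    · rw [div_le_one h1y]
      nlinarith
    · unfold bf
      rw [div_eq_iff (by positivity : bc k * y / (1 - y) + bc k ≠ 0)]
      field_simp
      ring

lemma bg_image (k : ℕ) : bg k '' Icc (0:ℝ) 1 = Icc (1 + bc k)⁻¹ 1 := by
  have hc := bc_pos k
  have h1c : (0:ℝ) < 1 + bc k := by linarith
  ext y
  simp only [mem_image, mem_Icc]
  constructor
  · rintro ⟨x, ⟨hx0, hx1⟩, rfl⟩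
    have hd := den2_pos k hx0
    unfold bg
    constructor
    · rw [inv_eq_one_div, div_le_div_iff₀ h1c hd]; nlinarith
    · rw [div_le_one hd]; nlinarith
  · rintro ⟨hy0, hy1⟩
    have hy0' : (0:ℝ) < y := lt_of_lt_of_le (by positivity) hy0
    have hy0'' : 1 ≤ y * (1 + bc k) := by
      rw [inv_eq_one_div] at hy0; exact (div_le_iff₀ h1c).mp hy0
    have h1y : (0:ℝ) ≤ 1 - y := by linarith
    refine ⟨(1 - y) / (bc k * y), ⟨div_nonneg h1y (by positivity), ?_⟩, ?_⟩
    · rw [div_le_one (by positivity)]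
      nlinarith
    · have hpos : 0 < 1 + bc k * ((1 - y) / (bc k * y)) := by
        have h2 : 0 ≤ bc k * ((1 - y) / (bc k * y)) :=
          mul_nonneg hc.le (div_nonneg h1y (by positivity))
        linarith
      unfold bg
      rw [div_eq_iff hpos.ne']
      field_simp
      ring

/-- 1-dimensional change of variables for lintegrals. -/
lemma cov {s : Set ℝ} (hs : MeasurableSet s) {f f' : ℝ → ℝ}
    (hf' : ∀ x ∈ s, HasDerivWithinAt f (f' x) s x) (hf : InjOn f s) (G : ℝ → ℝ≥0∞) :
    ∫⁻ y in f '' s, G y = ∫⁻ x in s, ENNReal.ofReal |f' x| * G (f x) := by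
  simpa only [ContinuousLinearMap.det_toSpanSingleton] using
    lintegral_image_eq_lintegral_abs_det_fderiv_mul volume hs
      (fun x hx => (hf' x hx).hasFDerivWithinAt) hf G

lemma step (h : ℝ → ℝ) (k : ℕ) :
    (∫⁻ x in Icc (0:ℝ) 1, ENNReal.ofReal ((x + bc k)⁻¹ ^ 2) * ‖h (bf k x)‖₊)
      + (∫⁻ x in Icc (0:ℝ) 1, ENNReal.ofReal ((1 + bc k * x)⁻¹ ^ 2) * ‖h (bg k x)‖₊)
      = ENNReal.ofReal (bc k)⁻¹ * ∫⁻ y in Icc (0:ℝ) 1, ‖h y‖₊ := by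
  have hc := bc_pos k
  have h1c : (0:ℝ) < 1 + bc k := by linarith
  set a : ℝ := (1 + bc k)⁻¹ with ha_def
  have ha0 : (0:ℝ) ≤ a := by positivity
  have ha1 : a ≤ 1 := by rw [ha_def, inv_le_one₀ h1c]; linarith
  set G : ℝ → ℝ≥0∞ := fun y => (‖h y‖₊ : ℝ≥0∞) with hG
  have covf : ∫⁻ y in Icc 0 a, G y
      = ∫⁻ x in Icc (0:ℝ) 1, ENNReal.ofReal |bc k / (x + bc k) ^ 2| * G (bf k x) := by
    rw [ha_def, ← bf_image k]
    exact cov measurableSet_Icc (fun x hx => bf_deriv k hx) (bf_inj k) G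
  have covg : ∫⁻ y in Icc a 1, G y
      = ∫⁻ x in Icc (0:ℝ) 1, ENNReal.ofReal |(-(bc k)) / (1 + bc k * x) ^ 2| * G (bg k x) := by
    rw [ha_def, ← bg_image k]
    exact cov measurableSet_Icc (fun x hx => bg_deriv k hx) (bg_inj k) G
  have ptf : ∀ᵐ x ∂(volume : Measure ℝ), x ∈ Icc (0:ℝ) 1 →
      ENNReal.ofReal |bc k / (x + bc k) ^ 2| * G (bf k x)
        = ENNReal.ofReal (bc k) * (ENNReal.ofReal ((x + bc k)⁻¹ ^ 2) * G (bf k x)) := by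
    refine Filter.Eventually.of_forall fun x hx => ?_
    rw [abs_of_nonneg (by positivity), div_eq_mul_inv, ← inv_pow,
      ENNReal.ofReal_mul hc.le, mul_assoc]
  have ptg : ∀ᵐ x ∂(volume : Measure ℝ), x ∈ Icc (0:ℝ) 1 →
      ENNReal.ofReal |(-(bc k)) / (1 + bc k * x) ^ 2| * G (bg k x)
        = ENNReal.ofReal (bc k) * (ENNReal.ofReal ((1 + bc k * x)⁻¹ ^ 2) * G (bg k x)) := by
    refine Filter.Eventually.of_forall fun x hx => ?_
    rw [abs_div, abs_neg, abs_of_nonneg hc.le, abs_of_nonneg (sq_nonneg _),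
      div_eq_mul_inv, ← inv_pow, ENNReal.ofReal_mul hc.le, mul_assoc]
  have hcancel : ENNReal.ofReal (bc k)⁻¹ * ENNReal.ofReal (bc k) = 1 := by
    rw [← ENNReal.ofReal_mul (by positivity), inv_mul_cancel₀ hc.ne', ENNReal.ofReal_one]
  have e1 : ∫⁻ x in Icc (0:ℝ) 1, ENNReal.ofReal ((x + bc k)⁻¹ ^ 2) * G (bf k x)
      = ENNReal.ofReal (bc k)⁻¹ * ∫⁻ y in Icc 0 a, G y := by
    rw [covf, setLIntegral_congr_fun_ae measurableSet_Icc ptf,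
      lintegral_const_mul' _ _ ENNReal.ofReal_ne_top, ← mul_assoc, hcancel, one_mul]
  have e2 : ∫⁻ x in Icc (0:ℝ) 1, ENNReal.ofReal ((1 + bc k * x)⁻¹ ^ 2) * G (bg k x)
      = ENNReal.ofReal (bc k)⁻¹ * ∫⁻ y in Icc a 1, G y := by
    rw [covg, setLIntegral_congr_fun_ae measurableSet_Icc ptg,
      lintegral_const_mul' _ _ ENNReal.ofReal_ne_top, ← mul_assoc, hcancel, one_mul]
  have hdisj : Disjoint (Ico (0:ℝ) a) (Icc a 1) := by
    rw [Set.disjoint_left]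
    rintro x hx hx'
    exact absurd hx.2 (not_lt.mpr hx'.1)
  have hunion : (∫⁻ y in Icc 0 a, G y) + ∫⁻ y in Icc a 1, G y = ∫⁻ y in Icc (0:ℝ) 1, G y := by
    rw [setLIntegral_congr (Ico_ae_eq_Icc (μ := volume) (a := (0:ℝ)) (b := a)).symm,
      ← lintegral_union measurableSet_Icc hdisj, Ico_union_Icc_eq_Icc ha0 ha1]
  rw [e1, e2, ← mul_add, hunion]

lemma geom : ∑' k : ℕ, ENNReal.ofReal ((bc k)⁻¹) = 1 := by
  have h : ∀ k : ℕ, ENNReal.ofReal ((bc k)⁻¹) = (2 : ℝ≥0∞)⁻¹ ^ (k + 1) := by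
    intro k
    rw [bc, ENNReal.ofReal_inv_of_pos (by positivity), ← ENNReal.inv_pow]
    congr 1
    rw [ENNReal.ofReal_pow (by norm_num)]
    norm_num
  simp_rw [h]
  rw [ENNReal.tsum_geometric_add_one, ENNReal.one_sub_inv_two, inv_inv,
    ENNReal.inv_mul_cancel two_ne_zero ENNReal.ofNat_ne_top]

noncomputable def Tm (h : ℝ → ℝ) (k : ℕ) (x : ℝ) : ℝ :=
  (x + bc k)⁻¹ ^ 2 * h (bf k x) + (1 + bc k * x)⁻¹ ^ 2 * h (bg k x)

lemma B2_eq (h : ℝ → ℝ) (x : ℝ) : B2 h x = ∑' k, Tm h k x := rfl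

lemma bf_meas (k : ℕ) : Measurable (bf k) :=
  measurable_id.div (measurable_id.add_const _)

lemma bg_meas (k : ℕ) : Measurable (bg k) :=
  measurable_const.div (measurable_const.add (measurable_id.const_mul _))

lemma Tm_meas {h : ℝ → ℝ} (hm : Measurable h) (k : ℕ) : Measurable (Tm h k) := by
  unfold Tm
  exact (((measurable_id.add_const _).inv.pow_const 2).mul (hm.comp (bf_meas k))).add
    (((measurable_const.add (measurable_id.const_mul _)).inv.pow_const 2).mul
      (hm.comp (bg_meas k)))

lemma ennnorm_tsum_le (f : ℕ → ℝ) : (‖∑' k, f k‖₊ : ℝ≥0∞) ≤ ∑' k, (‖f k‖₊ : ℝ≥0∞) := by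
  by_cases hs : Summable f
  · have h1 : Summable fun k => ‖f k‖₊ := by
      rw [← NNReal.summable_coe]
      simpa [coe_nnnorm, Real.norm_eq_abs] using hs.abs
    calc (‖∑' k, f k‖₊ : ℝ≥0∞) ≤ (((∑' k, ‖f k‖₊) : ℝ≥0) : ℝ≥0∞) :=
          ENNReal.coe_le_coe.2 (nnnorm_tsum_le h1)
      _ = ∑' k, (‖f k‖₊ : ℝ≥0∞) := ENNReal.coe_tsum h1
  · simp [tsum_eq_zero_of_not_summable hs]

lemma ennnorm_mul (a u : ℝ) (ha : 0 ≤ a) :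
    (‖a * u‖₊ : ℝ≥0∞) = ENNReal.ofReal a * ‖u‖₊ := by
  rw [← ENNReal.ofReal_coe_nnreal, ← ENNReal.ofReal_coe_nnreal, coe_nnnorm, coe_nnnorm,
    ← ENNReal.ofReal_mul ha]
  congr 1
  rw [Real.norm_eq_abs, Real.norm_eq_abs, abs_mul, abs_of_nonneg ha]

lemma point' (h : ℝ → ℝ) (k : ℕ) (x : ℝ) :
    (‖Tm h k x‖₊ : ℝ≥0∞) ≤ ENNReal.ofReal ((x + bc k)⁻¹ ^ 2) * ‖h (bf k x)‖₊
      + ENNReal.ofReal ((1 + bc k * x)⁻¹ ^ 2) * ‖h (bg k x)‖₊ := by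
  unfold Tm
  calc (‖(x + bc k)⁻¹ ^ 2 * h (bf k x) + (1 + bc k * x)⁻¹ ^ 2 * h (bg k x)‖₊ : ℝ≥0∞)
      ≤ (‖(x + bc k)⁻¹ ^ 2 * h (bf k x)‖₊ : ℝ≥0∞) + ‖(1 + bc k * x)⁻¹ ^ 2 * h (bg k x)‖₊ := by
        rw [← ENNReal.coe_add]; exact ENNReal.coe_le_coe.2 (nnnorm_add_le _ _)
    _ = ENNReal.ofReal ((x + bc k)⁻¹ ^ 2) * ‖h (bf k x)‖₊
        + ENNReal.ofReal ((1 + bc k * x)⁻¹ ^ 2) * ‖h (bg k x)‖₊ := by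
        rw [ennnorm_mul _ _ (sq_nonneg _), ennnorm_mul _ _ (sq_nonneg _)]

lemma point (h : ℝ → ℝ) (x : ℝ) :
    (‖B2 h x‖₊ : ℝ≥0∞) ≤ ∑' k, (ENNReal.ofReal ((x + bc k)⁻¹ ^ 2) * ‖h (bf k x)‖₊
      + ENNReal.ofReal ((1 + bc k * x)⁻¹ ^ 2) * ‖h (bg k x)‖₊) := by
  rw [B2_eq]
  exact le_trans (ennnorm_tsum_le _) (ENNReal.tsum_le_tsum fun k => point' h k x)

lemma lint_main {h : ℝ → ℝ} (hm : Measurable h) :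
    ∫⁻ x in Icc (0:ℝ) 1, (‖B2 h x‖₊ : ℝ≥0∞) ≤ ∫⁻ x in Icc (0:ℝ) 1, (‖h x‖₊ : ℝ≥0∞) := by
  have hU : ∀ k : ℕ, Measurable (fun x : ℝ =>
      ENNReal.ofReal ((x + bc k)⁻¹ ^ 2) * (‖h (bf k x)‖₊ : ℝ≥0∞)) := fun k =>
    (ENNReal.measurable_ofReal.comp ((measurable_id.add_const _).inv.pow_const 2)).mul
      ((hm.comp (bf_meas k)).nnnorm.coe_nnreal_ennreal)
  have hV : ∀ k : ℕ, Measurable (fun x : ℝ =>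
      ENNReal.ofReal ((1 + bc k * x)⁻¹ ^ 2) * (‖h (bg k x)‖₊ : ℝ≥0∞)) := fun k =>
    (ENNReal.measurable_ofReal.comp
        ((measurable_const.add (measurable_id.const_mul _)).inv.pow_const 2)).mul
      ((hm.comp (bg_meas k)).nnnorm.coe_nnreal_ennreal)
  calc ∫⁻ x in Icc (0:ℝ) 1, (‖B2 h x‖₊ : ℝ≥0∞)
      ≤ ∫⁻ x in Icc (0:ℝ) 1, ∑' k, (ENNReal.ofReal ((x + bc k)⁻¹ ^ 2) * ‖h (bf k x)‖₊
          + ENNReal.ofReal ((1 + bc k * x)⁻¹ ^ 2) * ‖h (bg k x)‖₊) :=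
        lintegral_mono fun x => point h x
    _ = ∑' k, ∫⁻ x in Icc (0:ℝ) 1, (ENNReal.ofReal ((x + bc k)⁻¹ ^ 2) * ‖h (bf k x)‖₊
          + ENNReal.ofReal ((1 + bc k * x)⁻¹ ^ 2) * ‖h (bg k x)‖₊) :=
        lintegral_tsum fun k => ((hU k).add (hV k)).aemeasurable
    _ = ∑' k, ((∫⁻ x in Icc (0:ℝ) 1, ENNReal.ofReal ((x + bc k)⁻¹ ^ 2) * ‖h (bf k x)‖₊)
          + ∫⁻ x in Icc (0:ℝ) 1, ENNReal.ofReal ((1 + bc k * x)⁻¹ ^ 2) * ‖h (bg k x)‖₊) :=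
        tsum_congr fun k => lintegral_add_left (hU k) _
    _ = ∑' k, ENNReal.ofReal ((bc k)⁻¹) * ∫⁻ y in Icc (0:ℝ) 1, (‖h y‖₊ : ℝ≥0∞) :=
        tsum_congr fun k => step h k
    _ = ∫⁻ y in Icc (0:ℝ) 1, (‖h y‖₊ : ℝ≥0∞) := by
        rw [ENNReal.tsum_mul_right, geom, one_mul]

lemma lint_phi {h : ℝ → ℝ} (hm : Measurable h) :
    ∫⁻ x in Icc (0:ℝ) 1, (∑' k, (‖Tm h k x‖₊ : ℝ≥0∞))
      ≤ ∫⁻ x in Icc (0:ℝ) 1, (‖h x‖₊ : ℝ≥0∞) := by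
  have hU : ∀ k : ℕ, Measurable (fun x : ℝ =>
      ENNReal.ofReal ((x + bc k)⁻¹ ^ 2) * (‖h (bf k x)‖₊ : ℝ≥0∞)) := fun k =>
    (ENNReal.measurable_ofReal.comp ((measurable_id.add_const _).inv.pow_const 2)).mul
      ((hm.comp (bf_meas k)).nnnorm.coe_nnreal_ennreal)
  have hV : ∀ k : ℕ, Measurable (fun x : ℝ =>
      ENNReal.ofReal ((1 + bc k * x)⁻¹ ^ 2) * (‖h (bg k x)‖₊ : ℝ≥0∞)) := fun k =>
    (ENNReal.measurable_ofReal.comp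
        ((measurable_const.add (measurable_id.const_mul _)).inv.pow_const 2)).mul
      ((hm.comp (bg_meas k)).nnnorm.coe_nnreal_ennreal)
  calc ∫⁻ x in Icc (0:ℝ) 1, (∑' k, (‖Tm h k x‖₊ : ℝ≥0∞))
      ≤ ∫⁻ x in Icc (0:ℝ) 1, ∑' k, (ENNReal.ofReal ((x + bc k)⁻¹ ^ 2) * ‖h (bf k x)‖₊
          + ENNReal.ofReal ((1 + bc k * x)⁻¹ ^ 2) * ‖h (bg k x)‖₊) :=
        lintegral_mono fun x => ENNReal.tsum_le_tsum fun k => point' h k x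
    _ = ∑' k, ∫⁻ x in Icc (0:ℝ) 1, (ENNReal.ofReal ((x + bc k)⁻¹ ^ 2) * ‖h (bf k x)‖₊
          + ENNReal.ofReal ((1 + bc k * x)⁻¹ ^ 2) * ‖h (bg k x)‖₊) :=
        lintegral_tsum fun k => ((hU k).add (hV k)).aemeasurable
    _ = ∑' k, ((∫⁻ x in Icc (0:ℝ) 1, ENNReal.ofReal ((x + bc k)⁻¹ ^ 2) * ‖h (bf k x)‖₊)
          + ∫⁻ x in Icc (0:ℝ) 1, ENNReal.ofReal ((1 + bc k * x)⁻¹ ^ 2) * ‖h (bg k x)‖₊) :=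
        tsum_congr fun k => lintegral_add_left (hU k) _
    _ = ∑' k, ENNReal.ofReal ((bc k)⁻¹) * ∫⁻ y in Icc (0:ℝ) 1, (‖h y‖₊ : ℝ≥0∞) :=
        tsum_congr fun k => step h k
    _ = ∫⁻ y in Icc (0:ℝ) 1, (‖h y‖₊ : ℝ≥0∞) := by
        rw [ENNReal.tsum_mul_right, geom, one_mul]

lemma pre_null {φ φ' : ℝ → ℝ} (hφm : Measurable φ) (hφ'm : Measurable φ')
    (hder : ∀ x ∈ Icc (0:ℝ) 1, HasDerivWithinAt φ (φ' x) (Icc 0 1) x)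
    (hinj : InjOn φ (Icc (0:ℝ) 1)) {ε : ℝ} (hε : 0 < ε)
    (hlb : ∀ x ∈ Icc (0:ℝ) 1, ε ≤ |φ' x|)
    {N : Set ℝ} (hNm : MeasurableSet N) (hN0 : volume N = 0) :
    volume (Icc (0:ℝ) 1 ∩ φ ⁻¹' N) = 0 := by
  have hpre : MeasurableSet (φ ⁻¹' N) := hφm hNm
  have h1 : ∫⁻ x in Icc (0:ℝ) 1, ENNReal.ofReal |φ' x| * N.indicator (1 : ℝ → ℝ≥0∞) (φ x)
      = 0 := by
    rw [← cov measurableSet_Icc hder hinj]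
    have : ∫⁻ y in φ '' Icc (0:ℝ) 1, N.indicator (1 : ℝ → ℝ≥0∞) y
        = (volume.restrict (φ '' Icc (0:ℝ) 1)) N := lintegral_indicator_one hNm
    rw [this, Measure.restrict_apply hNm]
    exact measure_inter_null_of_null_left _ hN0
  have hgmeas : Measurable fun x =>
      ENNReal.ofReal |φ' x| * N.indicator (1 : ℝ → ℝ≥0∞) (φ x) :=
    (ENNReal.measurable_ofReal.comp hφ'm.abs).mul ((measurable_one.indicator hNm).comp hφm)
  have h2 : ENNReal.ofReal ε * volume (Icc (0:ℝ) 1 ∩ φ ⁻¹' N) ≤ 0 := by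
    calc ENNReal.ofReal ε * volume (Icc (0:ℝ) 1 ∩ φ ⁻¹' N)
        = ∫⁻ x in Icc (0:ℝ) 1, ENNReal.ofReal ε * (φ ⁻¹' N).indicator (1 : ℝ → ℝ≥0∞) x := by
          rw [lintegral_const_mul' _ _ ENNReal.ofReal_ne_top, lintegral_indicator_one hpre,
            Measure.restrict_apply hpre, inter_comm]
      _ ≤ ∫⁻ x in Icc (0:ℝ) 1,
            ENNReal.ofReal |φ' x| * N.indicator (1 : ℝ → ℝ≥0∞) (φ x) := by
          refine setLIntegral_mono hgmeas fun x hx => ?_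
          have hind : (φ ⁻¹' N).indicator (1 : ℝ → ℝ≥0∞) x
              = N.indicator (1 : ℝ → ℝ≥0∞) (φ x) := by
            by_cases hmem : φ x ∈ N <;> simp [Set.indicator_apply, hmem]
          rw [hind]
          exact mul_le_mul' (ENNReal.ofReal_le_ofReal (hlb x hx)) le_rfl
      _ = 0 := h1
  rcases mul_eq_zero.mp (le_zero_iff.mp h2) with hbad | hgood
  · exact absurd hbad (ENNReal.ofReal_pos.mpr hε).ne'
  · exact hgood

lemma bad_null (k : ℕ) {N : Set ℝ} (hNm : MeasurableSet N) (hN0 : volume N = 0) :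
    volume (Icc (0:ℝ) 1 ∩ bf k ⁻¹' N ∪ Icc (0:ℝ) 1 ∩ bg k ⁻¹' N) = 0 := by
  have hc := bc_pos k
  have hε : (0:ℝ) < bc k / (1 + bc k) ^ 2 := by positivity
  have h1 : volume (Icc (0:ℝ) 1 ∩ bf k ⁻¹' N) = 0 := by
    refine pre_null (bf_meas k)
      (measurable_const.div ((measurable_id.add_const _).pow_const 2))
      (fun x hx => bf_deriv k hx) (bf_inj k) hε (fun x hx => ?_) hNm hN0
    have hd := den1_pos k hx.1
    simp only [Pi.div_apply]
    rw [abs_of_nonneg (div_nonneg hc.le (sq_nonneg _))]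
    gcongr
    · exact hx.2
  have h2 : volume (Icc (0:ℝ) 1 ∩ bg k ⁻¹' N) = 0 := by
    refine pre_null (bg_meas k)
      ((measurable_const.neg).div ((measurable_const.add (measurable_id.const_mul _)).pow_const 2))
      (fun x hx => bg_deriv k hx) (bg_inj k) hε (fun x hx => ?_) hNm hN0
    have hd := den2_pos k hx.1
    simp only [Pi.div_apply, Pi.neg_apply, Pi.add_apply]
    rw [abs_div, abs_neg, abs_of_nonneg hc.le, abs_of_nonneg (sq_nonneg _)]
    gcongr
    calc bc k * id x ≤ bc k * 1 := by
          have := hx.2; simpa using mul_le_mul_of_nonneg_left this hc.le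
      _ = bc k := mul_one _
  exact measure_union_null h1 h2

end B2Aux

open B2Aux in
theorem stmt_17 (h : ℝ → ℝ) (hint : MeasureTheory.IntegrableOn h (Set.Icc (0:ℝ) 1)) :
    ∫ t in Set.Icc (0:ℝ) 1, |B2 h t| ≤ ∫ t in Set.Icc (0:ℝ) 1, |h t| := by
  classical
  set μ : Measure ℝ := volume.restrict (Icc (0:ℝ) 1) with hμ
  have hhm : AEStronglyMeasurable h μ := hint.1
  set h' : ℝ → ℝ := hhm.mk h with hh'
  have hm' : Measurable h' := hhm.stronglyMeasurable_mk.measurable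
  have hae : h =ᵐ[μ] h' := hhm.ae_eq_mk
  have hnae : (fun x => (‖h x‖₊ : ℝ≥0∞)) =ᵐ[μ] fun x => (‖h' x‖₊ : ℝ≥0∞) :=
    hae.mono fun x hx => by simp only [hx]
  -- build a measurable null set capturing where h ≠ h'
  have hE : μ {y | h y ≠ h' y} = 0 := ae_iff.mp hae
  set N0 : Set ℝ := toMeasurable μ {y | h y ≠ h' y} with hN0def
  have hN0m : MeasurableSet N0 := measurableSet_toMeasurable μ _
  have hN0 : μ N0 = 0 := by rw [hN0def, measure_toMeasurable]; exact hE
  have hvol0 : volume (N0 ∩ Icc (0:ℝ) 1) = 0 := by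
    rw [hμ, Measure.restrict_apply hN0m] at hN0; exact hN0
  set N : Set ℝ := toMeasurable volume (N0 ∩ Icc (0:ℝ) 1) with hNdef
  have hNm : MeasurableSet N := measurableSet_toMeasurable _ _
  have hNnull : volume N = 0 := by rw [hNdef, measure_toMeasurable]; exact hvol0
  have hsub : {y | h y ≠ h' y} ∩ Icc (0:ℝ) 1 ⊆ N :=
    subset_trans (inter_subset_inter_left _ (subset_toMeasurable μ _)) (subset_toMeasurable _ _)
  -- B2 h = B2 h' a.e. on μ
  have hBad : volume (⋃ k : ℕ, (Icc (0:ℝ) 1 ∩ bf k ⁻¹' N ∪ Icc (0:ℝ) 1 ∩ bg k ⁻¹' N)) = 0 :=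
    measure_iUnion_null fun k => bad_null k hNm hNnull
  have hBeq : B2 h =ᵐ[μ] B2 h' := by
    rw [hμ, EventuallyEq, ae_restrict_iff' measurableSet_Icc]
    filter_upwards [measure_eq_zero_iff_ae_notMem.mp hBad] with x hx hxIcc
    rw [B2_eq, B2_eq]
    refine tsum_congr fun k => ?_
    have hf1 : h (bf k x) = h' (bf k x) := by
      by_contra hne
      exact hx (mem_iUnion.mpr ⟨k, Or.inl ⟨hxIcc, hsub ⟨hne, bf_mem k hxIcc⟩⟩⟩)
    have hf2 : h (bg k x) = h' (bg k x) := by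
      by_contra hne
      exact hx (mem_iUnion.mpr ⟨k, Or.inr ⟨hxIcc, hsub ⟨hne, bg_mem k hxIcc⟩⟩⟩)
    unfold Tm
    rw [hf1, hf2]
  have hBnae : (fun x => (‖B2 h x‖₊ : ℝ≥0∞)) =ᵐ[μ] fun x => (‖B2 h' x‖₊ : ℝ≥0∞) :=
    hBeq.mono fun x hx => by simp only [hx]
  -- finiteness
  have hfin : ∫⁻ x, (‖h x‖₊ : ℝ≥0∞) ∂μ ≠ ⊤ := hint.2.ne
  have hfin' : ∫⁻ x, (‖h' x‖₊ : ℝ≥0∞) ∂μ ≠ ⊤ := by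
    rw [← lintegral_congr_ae hnae]; exact hfin
  -- a.e. summability and measurability of B2 h'
  have hTm : ∀ k, Measurable (Tm h' k) := Tm_meas hm'
  have hΦm : Measurable fun x => ∑' k, (‖Tm h' k x‖₊ : ℝ≥0∞) :=
    Measurable.ennreal_tsum fun k => (hTm k).nnnorm.coe_nnreal_ennreal
  have hΦfin : ∫⁻ x, (∑' k, (‖Tm h' k x‖₊ : ℝ≥0∞)) ∂μ ≠ ⊤ :=
    ((hμ ▸ lint_phi hm').trans_lt (lt_top_iff_ne_top.mpr hfin')).ne
  have hsummae : ∀ᵐ x ∂μ, Summable fun k => Tm h' k x := by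
    filter_upwards [ae_lt_top hΦm hΦfin] with x hx
    exact Summable.of_nnnorm (ENNReal.tsum_coe_ne_top_iff_summable.mp hx.ne)
  have hBmeas' : AEMeasurable (B2 h') μ := by
    refine aemeasurable_of_tendsto_metrizable_ae' (f := fun n x =>
      ∑ k ∈ Finset.range n, Tm h' k x)
      (fun n => (Finset.measurable_sum _ fun k _ => hTm k).aemeasurable) ?_
    filter_upwards [hsummae] with x hx
    rw [B2_eq]
    exact hx.hasSum.tendsto_sum_nat
  have hBmeas : AEMeasurable (B2 h) μ := hBmeas'.congr hBeq.symm
  -- main lintegral bound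
  have hmain : ∫⁻ x, (‖B2 h x‖₊ : ℝ≥0∞) ∂μ ≤ ∫⁻ x, (‖h x‖₊ : ℝ≥0∞) ∂μ := by
    rw [lintegral_congr_ae hBnae, lintegral_congr_ae hnae]
    exact hμ ▸ lint_main hm'
  -- conclude
  have e1 : ∫ t in Icc (0:ℝ) 1, |B2 h t| = (∫⁻ x, (‖B2 h x‖₊ : ℝ≥0∞) ∂μ).toReal := by
    simp_rw [← enorm_eq_nnnorm]
    rw [← integral_norm_eq_lintegral_enorm hBmeas.aestronglyMeasurable]
    simp_rw [Real.norm_eq_abs]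
    rfl
  have e2 : ∫ t in Icc (0:ℝ) 1, |h t| = (∫⁻ x, (‖h x‖₊ : ℝ≥0∞) ∂μ).toReal := by
    simp_rw [← enorm_eq_nnnorm]
    rw [← integral_norm_eq_lintegral_enorm hhm]
    simp_rw [Real.norm_eq_abs]
    rfl
  rw [e1, e2]
  exact ENNReal.toReal_mono hfin hmain
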